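/- Let n ≥ 1, Q = 2n+2, and let M be a constant 2n×2n real symmetric positive definite symplectic matrix (M⁻¹ = Jᵗ M J). Then the function Γ_M := φ_M^{−(Q−2)/4}, where φ_M(x,t) = ⟨M⁻¹x,x⟩² + t², satisfies 𝓛_M Γ_M = 0 at every point of ℝ^{2n+1} ∖ {0}; i.e. Γ_M is, away from the origin, a solution of the constant-coefficient Heisenberg operator 𝓛_M. -/

import Mathlib

open MeasureTheory Set Matrix

noncomputable section

/-- Points of the Heisenberg group `ℍⁿ = ℝ^{2n} × ℝ`, written `z = (x, t)`. -/
abbrev Hpt (n : ℕ) := (Fin (2 * n) → ℝ) × ℝ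

/-- The standard symplectic matrix `J = (0, -Iₙ; Iₙ, 0)`. -/
def Jmat (n : ℕ) : Matrix (Fin (2 * n)) (Fin (2 * n)) ℝ :=
  Matrix.of fun i j =>
    if (i : ℕ) + n = (j : ℕ) then (-1 : ℝ) else if (j : ℕ) + n = (i : ℕ) then 1 else 0

/-- The Heisenberg group law `(x,t) ∘ (ξ,τ) = (x + ξ, t + τ + 2⟨Jx, ξ⟩)`. -/
def hmul {n : ℕ} (z w : Hpt n) : Hpt n :=
  (z.1 + w.1, z.2 + w.2 + 2 * ((Jmat n).mulVec z.1 ⬝ᵥ w.1))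

/-- The direction vector of the horizontal vector field `Xᵢ = ∂_{xᵢ} + 2(Jx)ᵢ ∂_t`
at a point with horizontal coordinates `x`. -/
def Xvec {n : ℕ} (x : Fin (2 * n) → ℝ) (i : Fin (2 * n)) : Hpt n :=
  (Pi.single i 1, 2 * (Jmat n).mulVec x i)

/-- The horizontal derivative `Xᵢ ψ`. -/
def Xd {n : ℕ} (i : Fin (2 * n)) (ψ : Hpt n → ℝ) (z : Hpt n) : ℝ :=
  fderiv ℝ ψ z (Xvec z.1 i)

/-- The horizontal gradient `∇_H ψ = (X₁ψ, …, X_{2n}ψ)`. -/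
def gradH {n : ℕ} (ψ : Hpt n → ℝ) (z : Hpt n) : Fin (2 * n) → ℝ := fun i => Xd i ψ z

/-- The operator `𝓛_A ψ = Σ_{i,j} a_{ij}(z) XᵢXⱼψ` for a (variable) coefficient matrix `A`. -/
def Lop {n : ℕ} (A : Hpt n → Matrix (Fin (2 * n)) (Fin (2 * n)) ℝ) (ψ : Hpt n → ℝ)
    (z : Hpt n) : ℝ :=
  ∑ i, ∑ j, A z i j * Xd i (Xd j ψ) z

/-- `φ_M(x,t) = ⟨M⁻¹x, x⟩² + t²`. -/
def phiM {n : ℕ} (M : Matrix (Fin (2 * n)) (Fin (2 * n)) ℝ) (z : Hpt n) : ℝ :=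
  (M⁻¹.mulVec z.1 ⬝ᵥ z.1) ^ 2 + z.2 ^ 2

/-- A matrix `M` is symplectic if `M⁻¹ = Jᵗ M J`. -/
def IsSymplecticMat {n : ℕ} (M : Matrix (Fin (2 * n)) (Fin (2 * n)) ℝ) : Prop :=
  M⁻¹ = (Jmat n)ᵀ * M * Jmat n


section Aux
variable {m : ℕ}

def dotCLM (c : Fin m → ℝ) : (Fin m → ℝ) →L[ℝ] ℝ :=
  ∑ i, c i • ContinuousLinearMap.proj i

@[simp] lemma dotCLM_apply (c v : Fin m → ℝ) : dotCLM c v = c ⬝ᵥ v := by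
  simp [dotCLM, dotProduct]

lemma dot_symm (A : Matrix (Fin m) (Fin m) ℝ) (hA : Aᵀ = A) (x v : Fin m → ℝ) :
    x ⬝ᵥ A.mulVec v = A.mulVec x ⬝ᵥ v := by
  rw [Matrix.dotProduct_mulVec, ← Matrix.mulVec_transpose, hA]

lemma mulVec_dot (B : Matrix (Fin m) (Fin m) ℝ) (u w : Fin m → ℝ) :
    B.mulVec u ⬝ᵥ w = u ⬝ᵥ Bᵀ.mulVec w := by
  rw [dotProduct_comm, Matrix.dotProduct_mulVec, ← Matrix.mulVec_transpose,
    dotProduct_comm]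

def qf (A : Matrix (Fin m) (Fin m) ℝ) (x : Fin m → ℝ) : ℝ := A.mulVec x ⬝ᵥ x

lemma hasFDerivAt_qf (A : Matrix (Fin m) (Fin m) ℝ) (hA : Aᵀ = A) (x : Fin m → ℝ) :
    HasFDerivAt (qf A) ((2:ℝ) • dotCLM (A.mulVec x)) x := by
  have hfun : qf A = fun y => ∑ i, (dotCLM (A i)) y *
      (ContinuousLinearMap.proj (R := ℝ) (φ := fun _ : Fin m => ℝ) i) y := by
    funext y
    simp [qf, dotProduct, Matrix.mulVec]
  rw [hfun]
  have H := HasFDerivAt.fun_sum (x := x) (u := Finset.univ)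
    (A := fun i => fun y => (dotCLM (A i)) y *
      (ContinuousLinearMap.proj (R := ℝ) (φ := fun _ : Fin m => ℝ) i) y)
    (A' := fun i => (dotCLM (A i)) x • ContinuousLinearMap.proj i
      + x i • dotCLM (A i))
    (fun i _ => ((dotCLM (A i)).hasFDerivAt).mul
      (ContinuousLinearMap.proj (R := ℝ) (φ := fun _ : Fin m => ℝ) i).hasFDerivAt)
  refine H.congr_fderiv ?_
  ext v
  simp only [ContinuousLinearMap.coe_sum', Finset.sum_apply, ContinuousLinearMap.add_apply,
    ContinuousLinearMap.smul_apply, ContinuousLinearMap.proj_apply, dotCLM_apply,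
    smul_eq_mul]
  rw [Finset.sum_add_distrib]
  have e1 : ∑ i, (A i ⬝ᵥ x) * v i = A.mulVec x ⬝ᵥ v := by
    simp [dotProduct, Matrix.mulVec]
  have e2 : ∑ i, x i * (A i ⬝ᵥ v) = x ⬝ᵥ A.mulVec v := by
    simp [dotProduct, Matrix.mulVec]
  rw [e1, e2, dot_symm A hA]
  ring

lemma dsum (M : Matrix (Fin m) (Fin m) ℝ) (c d : Fin m → ℝ) :
    ∑ i, ∑ j, M i j * (c i * d j) = c ⬝ᵥ M.mulVec d := by
  simp only [dotProduct, Matrix.mulVec, Finset.mul_sum]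
  exact Finset.sum_congr rfl fun i _ => Finset.sum_congr rfl fun j _ => by ring

lemma trsum (M N : Matrix (Fin m) (Fin m) ℝ) :
    ∑ i, ∑ j, M i j * N j i = (M * N).trace := by
  simp [Matrix.trace, Matrix.diag, Matrix.mul_apply]

end Aux

section HptAux
variable {n : ℕ}

/-- `φ` for a general matrix `A` (to be taken `A = M⁻¹`). -/
def phiA (A : Matrix (Fin (2*n)) (Fin (2*n)) ℝ) (z : Hpt n) : ℝ := qf A z.1 ^ 2 + z.2 ^ 2

def Pfun (A : Matrix (Fin (2*n)) (Fin (2*n)) ℝ) (z : Hpt n) (i : Fin (2*n)) : ℝ :=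
  4 * qf A z.1 * A.mulVec z.1 i + 4 * z.2 * (Jmat n).mulVec z.1 i

def Dphi (A : Matrix (Fin (2*n)) (Fin (2*n)) ℝ) (z : Hpt n) : Hpt n →L[ℝ] ℝ :=
  (4 * qf A z.1) • ((dotCLM (A.mulVec z.1)).comp (ContinuousLinearMap.fst ℝ (Fin (2*n) → ℝ) ℝ))
    + (2 * z.2) • ContinuousLinearMap.snd ℝ (Fin (2*n) → ℝ) ℝ

lemma Dphi_apply (A : Matrix (Fin (2*n)) (Fin (2*n)) ℝ) (z : Hpt n) (v : Hpt n) :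
    Dphi A z v = 4 * qf A z.1 * (A.mulVec z.1 ⬝ᵥ v.1) + 2 * z.2 * v.2 := by
  simp [Dphi, mul_assoc]

lemma hasFDerivAt_phiA (A : Matrix (Fin (2*n)) (Fin (2*n)) ℝ) (hA : Aᵀ = A) (z : Hpt n) :
    HasFDerivAt (phiA A) (Dphi A z) z := by
  have h1 : HasFDerivAt (fun w : Hpt n => qf A w.1)
      (((2:ℝ) • dotCLM (A.mulVec z.1)).comp (ContinuousLinearMap.fst ℝ (Fin (2*n) → ℝ) ℝ)) z :=
    (hasFDerivAt_qf A hA z.1).comp z hasFDerivAt_fst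
  have h3 : HasFDerivAt (fun w : Hpt n => w.2)
      (ContinuousLinearMap.snd ℝ (Fin (2*n) → ℝ) ℝ) z := hasFDerivAt_snd
  have h5 := (h1.mul h1).add (h3.mul h3)
  have hfun : phiA A = fun w : Hpt n => qf A w.1 * qf A w.1 + w.2 * w.2 := by
    funext w; simp [phiA]; ring
  rw [hfun]
  refine h5.congr_fderiv ?_
  refine ContinuousLinearMap.ext fun v => ?_
  simp only [ContinuousLinearMap.add_apply, ContinuousLinearMap.smul_apply,
    ContinuousLinearMap.coe_comp', Function.comp_apply, ContinuousLinearMap.coe_fst',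
    ContinuousLinearMap.coe_snd', dotCLM_apply, smul_eq_mul, Dphi_apply]
  ring

lemma Dphi_apply_Xvec (A : Matrix (Fin (2*n)) (Fin (2*n)) ℝ) (z : Hpt n)
    (i : Fin (2*n)) : Dphi A z (Xvec z.1 i) = Pfun A z i := by
  simp [Dphi_apply, Xvec, Pfun, dotProduct_single]
  ring

def gfun (A : Matrix (Fin (2*n)) (Fin (2*n)) ℝ) (r : ℝ) (j : Fin (2*n)) (z : Hpt n) : ℝ :=
  r * phiA A z ^ (r - 1) * Pfun A z j

lemma Xd_rpow (A : Matrix (Fin (2*n)) (Fin (2*n)) ℝ) (hA : Aᵀ = A) (r : ℝ) (z : Hpt n)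
    (hz : phiA A z ≠ 0) (j : Fin (2*n)) :
    Xd j (fun w => phiA A w ^ r) z = gfun A r j z := by
  have h := (hasFDerivAt_phiA A hA z).rpow_const (p := r) (Or.inl hz)
  unfold Xd
  rw [h.fderiv, ContinuousLinearMap.smul_apply, Dphi_apply_Xvec]
  simp [gfun, smul_eq_mul, mul_assoc]

lemma hasFDerivAt_row (c : Fin (2*n) → ℝ) (z : Hpt n) :
    HasFDerivAt (fun w : Hpt n => c ⬝ᵥ w.1)
      ((dotCLM c).comp (ContinuousLinearMap.fst ℝ (Fin (2*n) → ℝ) ℝ)) z := by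
  have hfun : (fun w : Hpt n => c ⬝ᵥ w.1)
      = fun w => ((dotCLM c).comp (ContinuousLinearMap.fst ℝ (Fin (2*n) → ℝ) ℝ)) w := by
    funext w; simp
  rw [hfun]
  exact ContinuousLinearMap.hasFDerivAt _

lemma Xd_gfun (A : Matrix (Fin (2*n)) (Fin (2*n)) ℝ) (hA : Aᵀ = A) (r : ℝ) (z : Hpt n)
    (hz : phiA A z ≠ 0) (i j : Fin (2*n)) :
    Xd i (gfun A r j) z =
      r * (r - 1) * phiA A z ^ (r - 2) * Pfun A z i * Pfun A z j
      + r * phiA A z ^ (r - 1) *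
        (8 * A.mulVec z.1 i * A.mulVec z.1 j + 4 * qf A z.1 * A j i
          + 8 * (Jmat n).mulVec z.1 i * (Jmat n).mulVec z.1 j + 4 * z.2 * Jmat n j i) := by
  have hq1 : HasFDerivAt (fun w : Hpt n => qf A w.1)
      (((2:ℝ) • dotCLM (A.mulVec z.1)).comp (ContinuousLinearMap.fst ℝ (Fin (2*n) → ℝ) ℝ)) z :=
    (hasFDerivAt_qf A hA z.1).comp z hasFDerivAt_fst
  have ha : HasFDerivAt (fun w : Hpt n => A.mulVec w.1 j)
      ((dotCLM (A j)).comp (ContinuousLinearMap.fst ℝ (Fin (2*n) → ℝ) ℝ)) z :=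
    hasFDerivAt_row (A j) z
  have hb : HasFDerivAt (fun w : Hpt n => (Jmat n).mulVec w.1 j)
      ((dotCLM (Jmat n j)).comp (ContinuousLinearMap.fst ℝ (Fin (2*n) → ℝ) ℝ)) z :=
    hasFDerivAt_row (Jmat n j) z
  have hsnd : HasFDerivAt (fun w : Hpt n => w.2)
      (ContinuousLinearMap.snd ℝ (Fin (2*n) → ℝ) ℝ) z := hasFDerivAt_snd
  have hP : HasFDerivAt (fun w : Hpt n => Pfun A w j) _ z :=
    ((hq1.const_mul (4:ℝ)).mul ha).add ((hsnd.const_mul (4:ℝ)).mul hb)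
  have hrp := ((hasFDerivAt_phiA A hA z).rpow_const (p := r - 1) (Or.inl hz)).const_mul r
  have hg : HasFDerivAt (gfun A r j) _ z := hrp.mul hP
  unfold Xd
  rw [hg.fderiv]
  have hexp : r - 1 - 1 = r - 2 := by ring
  simp only [ContinuousLinearMap.add_apply, ContinuousLinearMap.smul_apply,
    ContinuousLinearMap.coe_comp', Function.comp_apply, ContinuousLinearMap.coe_fst',
    ContinuousLinearMap.coe_snd', ContinuousLinearMap.coe_smul', Pi.smul_apply,
    smul_eq_mul, Dphi_apply_Xvec, hexp]
  simp only [Xvec, dotCLM_apply, dotProduct_single, mul_one]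
  ring

lemma Jmat_transpose (hn : 1 ≤ n) : (Jmat n)ᵀ = -(Jmat n) := by
  ext i j
  have hi := i.isLt
  have hj := j.isLt
  simp only [Matrix.transpose_apply, Matrix.neg_apply, Jmat, Matrix.of_apply]
  by_cases h1 : (i : ℕ) + n = (j : ℕ)
  · have h2 : ¬((j : ℕ) + n = (i : ℕ)) := by omega
    simp [h1, h2]
  · by_cases h2 : (j : ℕ) + n = (i : ℕ) <;> simp [h1, h2]

lemma phiA_pos (A : Matrix (Fin (2*n)) (Fin (2*n)) ℝ) (hA : A.PosDef) (z : Hpt n)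
    (hz : z ≠ 0) : 0 < phiA A z := by
  rcases eq_or_ne z.1 0 with h | h
  · have ht : z.2 ≠ 0 := by
      intro h2
      exact hz (Prod.ext h h2)
    have : 0 < z.2 ^ 2 := by positivity
    have hq := sq_nonneg (qf A z.1)
    unfold phiA
    nlinarith
  · have hq : 0 < qf A z.1 := by
      have := hA.re_dotProduct_pos h
      simp only [RCLike.re_to_real, star_trivial] at this
      unfold qf
      rw [dotProduct_comm]
      exact this
    have ht := sq_nonneg z.2
    unfold phiA
    nlinarith

end HptAux

/-- Remark 3.3. For a constant symmetric positive definite symplectic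
matrix `M`, the function `Γ_M = φ_M^{-(Q-2)/4}` satisfies `𝓛_M Γ_M = 0` away from the
origin, where `Q = 2n+2`. -/
theorem stmt2 (n : ℕ) (hn : 1 ≤ n) (Q : ℝ) (hQ : Q = 2 * n + 2)
    (M : Matrix (Fin (2 * n)) (Fin (2 * n)) ℝ)
    (hsymm : M.IsSymm) (hpos : M.PosDef) (hsympl : IsSymplecticMat M)
    (Γ : Hpt n → ℝ) (hΓ : ∀ z : Hpt n, Γ z = phiM M z ^ (-(Q - 2) / 4 : ℝ)) :
    ∀ z : Hpt n, z ≠ 0 → Lop (fun _ => M) Γ z = 0 := by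
  intro z hz
  obtain ⟨r, hrdef⟩ : ∃ r : ℝ, r = -(Q - 2) / 4 := ⟨_, rfl⟩
  have hMT : Mᵀ = M := hsymm
  have hAT : (M⁻¹)ᵀ = M⁻¹ := by rw [Matrix.transpose_nonsing_inv, hMT]
  have hApos : (M⁻¹).PosDef := hpos.inv
  have hdet : IsUnit M.det := hpos.det_pos.ne'.isUnit
  have hMA : M * M⁻¹ = 1 := Matrix.mul_nonsing_inv M hdet
  have hAM : M⁻¹ * M = 1 := Matrix.nonsing_inv_mul M hdet
  have hJT : (Jmat n)ᵀ = -(Jmat n) := Jmat_transpose hn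
  have hsy : M⁻¹ = (Jmat n)ᵀ * M * Jmat n := hsympl
  have hΓeq : Γ = fun w => phiA M⁻¹ w ^ r := funext fun w => by rw [hΓ w, hrdef]; rfl
  have hφpos := phiA_pos M⁻¹ hApos z hz
  have hφne : phiA M⁻¹ z ≠ 0 := ne_of_gt hφpos
  have hEE : ∀ j, Xd j (fun w => phiA M⁻¹ w ^ r) =ᶠ[nhds z] gfun M⁻¹ r j := by
    intro j
    filter_upwards [IsOpen.mem_nhds isOpen_ne hz] with w hw
    exact Xd_rpow M⁻¹ hAT r w (ne_of_gt (phiA_pos M⁻¹ hApos w hw)) j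
  have hXd2 : ∀ i j, Xd i (Xd j (fun w => phiA M⁻¹ w ^ r)) z = Xd i (gfun M⁻¹ r j) z := by
    intro i j
    show fderiv ℝ (Xd j (fun w => phiA M⁻¹ w ^ r)) z (Xvec z.1 i) = Xd i (gfun M⁻¹ r j) z
    rw [Filter.EventuallyEq.fderiv_eq (hEE j)]
    rfl
  rw [hΓeq]
  unfold Lop
  have key : ∀ i j : Fin (2*n),
      M i j * Xd i (Xd j (fun w => phiA M⁻¹ w ^ r)) z =
      (16*(r*(r-1)*phiA M⁻¹ z^(r-2))*(qf M⁻¹ z.1)^2 + 8*(r*phiA M⁻¹ z^(r-1)))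
        * (M i j * (M⁻¹.mulVec z.1 i * M⁻¹.mulVec z.1 j))
    + (16*(r*(r-1)*phiA M⁻¹ z^(r-2))*(qf M⁻¹ z.1)*z.2)
        * (M i j * (M⁻¹.mulVec z.1 i * (Jmat n).mulVec z.1 j))
    + (16*(r*(r-1)*phiA M⁻¹ z^(r-2))*(qf M⁻¹ z.1)*z.2)
        * (M i j * ((Jmat n).mulVec z.1 i * M⁻¹.mulVec z.1 j))
    + (16*(r*(r-1)*phiA M⁻¹ z^(r-2))*z.2^2 + 8*(r*phiA M⁻¹ z^(r-1)))
        * (M i j * ((Jmat n).mulVec z.1 i * (Jmat n).mulVec z.1 j))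
    + (4*(r*phiA M⁻¹ z^(r-1))*(qf M⁻¹ z.1)) * (M i j * M⁻¹ j i)
    + (4*(r*phiA M⁻¹ z^(r-1))*z.2) * (M i j * Jmat n j i) := by
    intro i j
    rw [hXd2 i j, Xd_gfun M⁻¹ hAT r z hφne i j]
    simp only [Pfun]
    ring
  rw [Finset.sum_congr rfl (fun i _ => Finset.sum_congr rfl (fun j _ => key i j))]
  simp only [Finset.sum_add_distrib, ← Finset.mul_sum]
  rw [dsum, dsum, dsum, dsum, trsum, trsum]
  have haa : M⁻¹.mulVec z.1 ⬝ᵥ M.mulVec (M⁻¹.mulVec z.1) = qf M⁻¹ z.1 := by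
    rw [Matrix.mulVec_mulVec, hMA, Matrix.one_mulVec]; rfl
  have hxJ : z.1 ⬝ᵥ (Jmat n).mulVec z.1 = 0 := by
    have h1 : z.1 ⬝ᵥ (Jmat n).mulVec z.1 = ((Jmat n)ᵀ).mulVec z.1 ⬝ᵥ z.1 := by
      rw [Matrix.dotProduct_mulVec, ← Matrix.mulVec_transpose]
    rw [hJT, Matrix.neg_mulVec, neg_dotProduct,
      dotProduct_comm ((Jmat n).mulVec z.1) z.1] at h1
    linarith
  have hab : M⁻¹.mulVec z.1 ⬝ᵥ M.mulVec ((Jmat n).mulVec z.1) = 0 := by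
    rw [Matrix.mulVec_mulVec, ← dot_symm M⁻¹ hAT, Matrix.mulVec_mulVec, ← Matrix.mul_assoc,
      hAM, Matrix.one_mul, hxJ]
  have hba : (Jmat n).mulVec z.1 ⬝ᵥ M.mulVec (M⁻¹.mulVec z.1) = 0 := by
    rw [Matrix.mulVec_mulVec, hMA, Matrix.one_mulVec, dotProduct_comm, hxJ]
  have hbb : (Jmat n).mulVec z.1 ⬝ᵥ M.mulVec ((Jmat n).mulVec z.1) = qf M⁻¹ z.1 := by
    rw [Matrix.mulVec_mulVec, mulVec_dot, Matrix.mulVec_mulVec, ← Matrix.mul_assoc, ← hsy,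
      dot_symm M⁻¹ hAT]
    rfl
  have htrMA : (M * M⁻¹).trace = (2*(n:ℝ)) := by
    rw [hMA, Matrix.trace_one]
    simp
  have htrMJ : (M * Jmat n).trace = 0 := by
    have h1 : (M * Jmat n).trace = ((M * Jmat n)ᵀ).trace := (Matrix.trace_transpose _).symm
    rw [Matrix.transpose_mul, hJT, hMT, Matrix.neg_mul, Matrix.trace_neg,
      Matrix.trace_mul_comm] at h1
    rw [Matrix.trace_mul_comm M (Jmat n)]
    linarith
  rw [haa, hab, hba, hbb, htrMA, htrMJ]
  have hpow : phiA M⁻¹ z ^ (r-2) * phiA M⁻¹ z = phiA M⁻¹ z ^ (r-1) := by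
    have h12 : r - 2 + 1 = r - 1 := by ring
    rw [← Real.rpow_add_one hφne (r-2), h12]
  have hrval : 16 * r + 8 * (n:ℝ) = 0 := by
    rw [hrdef, hQ]; ring
  have hphi : phiA M⁻¹ z = qf M⁻¹ z.1 ^ 2 + z.2 ^ 2 := rfl
  linear_combination (16*r*(r-1)*(qf M⁻¹ z.1)) * hpow
    + (r * phiA M⁻¹ z ^ (r-1) * (qf M⁻¹ z.1)) * hrval
    + (-(16*r*(r-1)* phiA M⁻¹ z ^ (r-2) * (qf M⁻¹ z.1))) * hphi

end
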